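/- Let D be a probability measure on X × {-1,1}, let h_1, h_2 : X → {-1,1} be measurable, set p := D({(x,y) : h_1(x) ≠ h_2(x)}), and let τ ≥ 0 be a real number. Assume p ≤ 1/2, p ≤ 4τ, τ ≤ 1/16, and er_D(h_1) + er_D(h_2) ≤ 2τ + p/2. Let D_= denote the conditional probability measure of D given the event {(x,y) : h_1(x) = h_2(x)}. Then er_{D_=}(h_1) + er_{D_=}(h_2) ≤ 2τ - p/4; in particular min{ er_{D_=}(h_1), er_{D_=}(h_2) } ≤ τ - p/8. -/

import Mathlib

open MeasureTheory ProbabilityTheory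

abbrev Label : Type := ↥({-1, 1} : Finset ℤ)

noncomputable def erD {X : Type*} [MeasurableSpace X]
    (D : Measure (X × Label)) (h : X → Label) : ℝ :=
  (D {p | h p.1 ≠ p.2}).toReal

lemma label_two : ∀ a b c : Label, a ≠ b → c = a ∨ c = b := by decide

/-- two near-optimal hypotheses that disagree with probability `p` have a
noticeably smaller error under the conditional distribution on their agreement event. -/
theorem disagreeing_experts_progress {X : Type*} [MeasurableSpace X]
    (D : Measure (X × Label)) [IsProbabilityMeasure D]
    (h1 h2 : X → Label) (hm1 : Measurable h1) (hm2 : Measurable h2)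
    (p τ : ℝ) (hpdef : p = (D {q : X × Label | h1 q.1 ≠ h2 q.1}).toReal)
    (hτ0 : 0 ≤ τ) (hp2 : p ≤ 1 / 2) (hp4 : p ≤ 4 * τ) (hτ16 : τ ≤ 1 / 16)
    (hsum : erD D h1 + erD D h2 ≤ 2 * τ + p / 2) :
    erD (D[|{q : X × Label | h1 q.1 = h2 q.1}]) h1 +
        erD (D[|{q : X × Label | h1 q.1 = h2 q.1}]) h2 ≤ 2 * τ - p / 4 ∧
      min (erD (D[|{q : X × Label | h1 q.1 = h2 q.1}]) h1)
          (erD (D[|{q : X × Label | h1 q.1 = h2 q.1}]) h2) ≤ τ - p / 8 := by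
  set A : Set (X × Label) := {q | h1 q.1 = h2 q.1} with hAdef
  set S1 : Set (X × Label) := {q | h1 q.1 ≠ q.2} with hS1def
  set S2 : Set (X × Label) := {q | h2 q.1 ≠ q.2} with hS2def
  have hA : MeasurableSet A :=
    measurableSet_eq_fun (hm1.comp measurable_fst) (hm2.comp measurable_fst)
  have hS1 : MeasurableSet S1 :=
    (measurableSet_eq_fun (hm1.comp measurable_fst) measurable_snd).compl
  have hS2 : MeasurableSet S2 :=
    (measurableSet_eq_fun (hm2.comp measurable_fst) measurable_snd).compl
  have hAc : Aᶜ = {q : X × Label | h1 q.1 ≠ h2 q.1} := rfl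
  -- basic measures
  have hfin : ∀ s : Set (X × Label), D s ≠ ⊤ := fun s => measure_ne_top D s
  have hp0 : 0 ≤ p := hpdef ▸ ENNReal.toReal_nonneg
  -- D A = 1 - p
  have hsplitA : D A + D Aᶜ = 1 := by
    rw [measure_add_measure_compl hA, measure_univ]
  have hDA : (D A).toReal = 1 - p := by
    have := congrArg ENNReal.toReal hsplitA
    rw [ENNReal.toReal_add (hfin A) (hfin Aᶜ)] at this
    rw [hAc] at this
    simp at this
    rw [hpdef]; linarith
  -- split of the disagreement region
  have hdisj : Disjoint (S1 ∩ Aᶜ) (S2 ∩ Aᶜ) := by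
    rw [Set.disjoint_left]
    rintro ⟨x, y⟩ ⟨hy1, hne⟩ ⟨hy2, -⟩
    simp only [hS1def, hS2def, hAdef, Set.mem_setOf_eq, Set.mem_compl_iff] at hy1 hy2 hne
    rcases label_two (h1 x) (h2 x) y hne with h | h
    · exact hy1 h.symm
    · exact hy2 h.symm
  have hunion : (S1 ∩ Aᶜ) ∪ (S2 ∩ Aᶜ) = Aᶜ := by
    ext ⟨x, y⟩
    simp only [hS1def, hS2def, hAdef, Set.mem_union, Set.mem_inter_iff, Set.mem_compl_iff,
      Set.mem_setOf_eq]
    constructor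
    · rintro (⟨-, h⟩ | ⟨-, h⟩) <;> exact h
    · intro hne
      by_cases h : h1 x = y
      · right; exact ⟨fun h2y => hne (h.trans h2y.symm), hne⟩
      · left; exact ⟨h, hne⟩
  have hAcsplit : D (S1 ∩ Aᶜ) + D (S2 ∩ Aᶜ) = D Aᶜ := by
    rw [← measure_union hdisj (hS2.inter hA.compl), hunion]
  -- decompositions of the errors
  have hs1 : D (S1 ∩ A) + D (S1 ∩ Aᶜ) = D S1 := by
    have := measure_inter_add_diff (μ := D) S1 hA
    rwa [Set.diff_eq] at this
  have hs2 : D (S2 ∩ A) + D (S2 ∩ Aᶜ) = D S2 := by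
    have := measure_inter_add_diff (μ := D) S2 hA
    rwa [Set.diff_eq] at this
  set a1 := (D (S1 ∩ A)).toReal
  set a2 := (D (S2 ∩ A)).toReal
  have ha1 : 0 ≤ a1 := ENNReal.toReal_nonneg
  have ha2 : 0 ≤ a2 := ENNReal.toReal_nonneg
  have he1 : erD D h1 = a1 + (D (S1 ∩ Aᶜ)).toReal := by
    rw [erD, ← hs1, ENNReal.toReal_add (hfin _) (hfin _)]
  have he2 : erD D h2 = a2 + (D (S2 ∩ Aᶜ)).toReal := by
    rw [erD, ← hs2, ENNReal.toReal_add (hfin _) (hfin _)]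
  have hbp : (D (S1 ∩ Aᶜ)).toReal + (D (S2 ∩ Aᶜ)).toReal = p := by
    have := congrArg ENNReal.toReal hAcsplit
    rw [ENNReal.toReal_add (hfin _) (hfin _), hAc] at this
    rw [hpdef]; exact this
  have hb1 : 0 ≤ (D (S1 ∩ Aᶜ)).toReal := ENNReal.toReal_nonneg
  have hb2 : 0 ≤ (D (S2 ∩ Aᶜ)).toReal := ENNReal.toReal_nonneg
  have hkey : a1 + a2 ≤ 2 * τ - p / 2 := by
    rw [he1, he2] at hsum; linarith
  -- conditional errors
  have hDA' : D A ≠ 0 := by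
    intro h
    rw [h] at hDA
    simp at hDA
    linarith
  have hcond : ∀ (S : Set (X × Label)),
      (D[|A] S).toReal = (D (S ∩ A)).toReal / (1 - p) := by
    intro S
    rw [cond_apply hA D S, ENNReal.toReal_mul, ENNReal.toReal_inv, hDA, Set.inter_comm]
    ring
  have hc1 : erD (D[|A]) h1 = a1 / (1 - p) := hcond S1
  have hc2 : erD (D[|A]) h2 = a2 / (1 - p) := hcond S2
  have h1p : (0:ℝ) < 1 - p := by linarith
  have hmain : erD (D[|A]) h1 + erD (D[|A]) h2 ≤ 2 * τ - p / 4 := by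
    rw [hc1, hc2, ← add_div, div_le_iff₀ h1p]
    nlinarith
  refine ⟨hmain, ?_⟩
  rcases le_total (erD (D[|A]) h1) (erD (D[|A]) h2) with h | h
  · rw [min_eq_left h]; linarith
  · rw [min_eq_right h]; linarith
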